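/- Let A be a complex unital Banach algebra, exp : A → A the exponential given by the power series ∑_{n=0}^{∞} xⁿ/n!, and τ : A → ℂ a continuous ℂ-linear functional satisfying τ(xy) = τ(yx) for all x, y ∈ A. Let a : ℝ → A, t ∈ ℝ, and suppose a has derivative a' ∈ A at t and the function s ↦ exp(a(s)) has derivative v ∈ A at t. Then τ(exp(−a(t))·v) = τ(a'). -/

import Mathlib

open NormedSpace Filter Topology

theorem stmt_12 (A : Type*) [NormedRing A] [NormedAlgebra ℂ A] [CompleteSpace A]
    (τ : A →L[ℂ] ℂ) (htr : ∀ x y : A, τ (x * y) = τ (y * x))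
    (a : ℝ → A) (t : ℝ) (a' v : A)
    (ha : HasDerivAt a a' t)
    (hv : HasDerivAt (fun s => NormedSpace.exp (a s)) v t) :
    τ (NormedSpace.exp (-(a t)) * v) = τ a' := by
  have key : ∀ x : A, NormedSpace.exp x = exp x := fun x => rfl
  let +nondep : NormedAlgebra ℚ A := NormedAlgebra.restrictScalars ℚ ℂ A
  set c := a t with hc
  set g : A → ℝ → A := fun b r => exp (r • (-c)) * exp (r • b) with hg
  have hsmulcont : ∀ y : A, Continuous fun r : ℝ => exp (r • y) :=
    fun y => exp_continuous.comp (continuous_id.smul continuous_const)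
  have hgcont : ∀ b, Continuous (g b) := fun b => (hsmulcont (-c)).mul (hsmulcont b)
  -- derivative of r ↦ τ (g b r)
  have hφ : ∀ (b : A) (r : ℝ),
      HasDerivAt (fun r => τ (g b r)) (τ (g b r * (b - c))) r := by
    intro b r
    have h1 : HasDerivAt (fun u : ℝ => exp (u • (-c))) ((-c) * exp (r • (-c))) r :=
      hasDerivAt_exp_smul_const' (-c) r
    have h2 : HasDerivAt (fun u : ℝ => exp (u • b)) (b * exp (r • b)) r :=
      hasDerivAt_exp_smul_const' b r
    have h3 := h1.mul h2
    have h4 := (τ.hasFDerivAt.restrictScalars ℝ).comp_hasDerivAt r h3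
    simp only [ContinuousLinearMap.coe_restrictScalars'] at h4
    refine h4.congr_deriv (Eq.symm ?_)
    have hcomm : b * exp (r • b) = exp (r • b) * b :=
      (((Commute.refl b).smul_right r).exp_right).eq
    set Y := exp (r • (-c))
    set Z := exp (r • b)
    have e1 : τ ((-c) * Y * Z + Y * (b * Z)) = τ ((-c) * (Y * Z)) + τ (Y * (Z * b)) := by
      rw [mul_assoc, hcomm, map_add]
    rw [hg, e1, htr (-c) (Y * Z)]
    simp only [mul_sub, mul_neg, map_sub, map_neg, ← mul_assoc]
    ring
  -- FTC
  have hFTC : ∀ b : A,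
      τ (exp (-c) * exp b) = τ 1 + ∫ r in (0:ℝ)..1, τ (g b r * (b - c)) := by
    intro b
    have hcont : Continuous fun r : ℝ => τ (g b r * (b - c)) :=
      τ.continuous.comp ((hgcont b).mul continuous_const)
    have hint := intervalIntegral.integral_eq_sub_of_hasDerivAt
      (f := fun r => τ (g b r)) (f' := fun r => τ (g b r * (b - c)))
      (fun r _ => hφ b r) (hcont.intervalIntegrable 0 1)
    rw [hint]
    have hg1 : g b 1 = exp (-c) * exp b := by simp [hg]
    have hg0 : g b 0 = 1 := by simp [hg]
    simp only [hg1, hg0]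
    ring
  -- pull τ and right multiplication out of the integral
  have hpull : ∀ b : A, (∫ r in (0:ℝ)..1, τ (g b r * (b - c)))
      = τ ((∫ r in (0:ℝ)..1, g b r) * (b - c)) := by
    intro b
    have hgi : IntervalIntegrable (g b) MeasureTheory.volume 0 1 :=
      (hgcont b).intervalIntegrable 0 1
    have := ContinuousLinearMap.intervalIntegral_comp_comm
      (τ.comp ((ContinuousLinearMap.mul ℂ A).flip (b - c))) hgi
    simpa only [ContinuousLinearMap.comp_apply, ContinuousLinearMap.flip_apply,
      ContinuousLinearMap.mul_apply'] using this
  set M : ℝ → A := fun s => ∫ r in (0:ℝ)..1, g (a s) r with hM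
  have hFs : ∀ s, τ (exp (-c) * exp (a s)) = τ 1 + τ (M s * (a s - c)) := by
    intro s
    rw [hFTC (a s), hpull (a s)]
  -- derivative coming from hv
  have hd1 : HasDerivAt (fun s => τ (exp (-c) * exp (a s))) (τ (exp (-c) * v)) t := by
    have h0 : HasDerivAt (fun s => exp (-c) * exp (a s)) (exp (-c) * v) t :=
      hv.const_mul (exp (-c))
    have h4 := (τ.hasFDerivAt.restrictScalars ℝ).comp_hasDerivAt t h0
    exact h4
  -- M t = 1
  have hgc1 : ∀ r : ℝ, g c r = 1 := by
    intro r
    have hcom : Commute (r • (-c)) (r • c) :=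
      (((Commute.refl c).neg_left).smul_left r).smul_right r
    rw [hg]
    simp only
    rw [← exp_add_of_commute hcom, smul_neg, neg_add_cancel, exp_zero]
  have hMt : M t = 1 := by
    simp [hM, ← hc, hgc1]
  -- continuity of M at t
  have hMcont : ContinuousAt M t := by
    have hN : Continuous fun x : A => ∫ r in (0:ℝ)..1, exp (r • (-c)) * exp (r • x) := by
      apply intervalIntegral.continuous_parametric_intervalIntegral_of_continuous'
      exact ((exp_continuous.comp (continuous_snd.smul continuous_const)).mul
        (exp_continuous.comp (continuous_snd.smul continuous_fst)))
    exact (hN.continuousAt).comp ha.continuousAt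
  -- second derivative computation via slopes
  have hd2 : HasDerivAt (fun s => τ (exp (-c) * exp (a s))) (τ a') t := by
    rw [hasDerivAt_iff_tendsto_slope]
    have heq : (slope (fun s => τ (exp (-c) * exp (a s))) t)
        = fun s => τ (M s * slope a t s) := by
      funext s
      rw [slope_def_module, slope_def_module, hFs s, hFs t, sub_self, mul_zero, map_zero,
        add_zero, add_sub_cancel_left, ← ContinuousLinearMap.map_smul_of_tower,
        mul_smul_comm]
    rw [heq]
    have h1 : Tendsto (slope a t) (𝓝[≠] t) (𝓝 a') := hasDerivAt_iff_tendsto_slope.mp ha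
    have h2 : Tendsto M (𝓝[≠] t) (𝓝 (1 : A)) := by
      have h2' : Tendsto M (𝓝 t) (𝓝 (M t)) := hMcont.tendsto
      rw [hMt] at h2'
      exact h2'.mono_left nhdsWithin_le_nhds
    have h3 : Tendsto (fun s => M s * slope a t s) (𝓝[≠] t) (𝓝 (1 * a')) := h2.mul h1
    rw [one_mul] at h3
    exact (τ.continuous.tendsto a').comp h3
  exact hd1.unique hd2
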